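/- Csiszár's inequality: let μ, ν be probability measures on (Ω,ℱ), and let Δ' ⊂ Δ be finite subsets of 𝕃 such that μ_Δ ≪ ν_Δ (hence also μ_{Δ'} ≪ ν_{Δ'}), with densities g_Δ = dμ_Δ/dν_Δ and g_{Δ'} = dμ_{Δ'}/dν_{Δ'}. Then H_Δ(μ|ν) − H_{Δ'}(μ|ν) ≥ (1/2) (∫_Ω |g_Δ(ω) − g_{Δ'}(ω)| dν(ω))². -/

import Mathlib

open MeasureTheory Filter Topology
open scoped ENNReal MeasureTheory Classical

noncomputable section

/-- The σ-algebra on configuration space generated by the coordinates in `Δ`. -/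
def cylinderSigma (Ω₀ : Type*) [MeasurableSpace Ω₀] {ι : Type*} (Δ : Set ι) :
    MeasurableSpace (ι → Ω₀) :=
  MeasurableSpace.comap (fun ω (x : Δ) => ω (x : ι)) MeasurableSpace.pi

/-- The configuration agreeing with `ω` on `S` and with `θ` off `S`. -/
def splice {ι Ω₀ : Type*} (S : Set ι) (ω θ : ι → Ω₀) : ι → Ω₀ :=
  fun x => if x ∈ S then ω x else θ x

/-- A function is local if it is measurable with respect to a finite cylinder σ-algebra. -/
def IsLocal {ι Ω₀ : Type*} [MeasurableSpace Ω₀] (f : (ι → Ω₀) → ℝ) : Prop :=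
  ∃ Δ : Finset ι, Measurable[cylinderSigma Ω₀ (Δ : Set ι)] f

/-- Quasilocality of `f` in the direction `θ`. -/
def QuasilocalInDir {ι Ω₀ : Type*} (θ : ι → Ω₀) (f : (ι → Ω₀) → ℝ) : Prop :=
  ∀ ω, Tendsto (fun S : Finset ι => f (splice (S : Set ι) ω θ)) atTop (𝓝 (f ω))

/-- `f` is quasilocal: a uniform limit of local functions. -/
def IsQuasilocal {ι Ω₀ : Type*} [MeasurableSpace Ω₀] (f : (ι → Ω₀) → ℝ) : Prop :=
  ∀ ε : ℝ, 0 < ε → ∃ g, IsLocal g ∧ ∀ ω, |f ω - g ω| ≤ ε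

/-- A specification: a proper consistent family of probability kernels indexed by
finite subsets of the site space. -/
structure Specification (ι Ω₀ : Type*) [MeasurableSpace Ω₀] where
  k : Finset ι → (ι → Ω₀) → Measure (ι → Ω₀)
  isProb : ∀ Λ ω, IsProbabilityMeasure (k Λ ω)
  meas : ∀ (Λ : Finset ι) (A : Set (ι → Ω₀)), MeasurableSet A →
    Measurable[cylinderSigma Ω₀ ((Λ : Set ι))ᶜ] (fun ω => k Λ ω A)
  proper : ∀ (Λ : Finset ι) (B : Set (ι → Ω₀)),
    MeasurableSet[cylinderSigma Ω₀ ((Λ : Set ι))ᶜ] B → ∀ ω, k Λ ω B = B.indicator 1 ω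
  consistent : ∀ ⦃Λ Λ' : Finset ι⦄, Λ ⊆ Λ' → ∀ ω, (k Λ' ω).bind (k Λ) = k Λ' ω

/-- `γ_Λ f`, the expectation of `f` under the kernel of the specification. -/
def specInt {ι Ω₀ : Type*} [MeasurableSpace Ω₀] (γ : Specification ι Ω₀)
    (Λ : Finset ι) (f : (ι → Ω₀) → ℝ) (ω : ι → Ω₀) : ℝ :=
  ∫ x, f x ∂(γ.k Λ ω)

/-- DLR consistency of a measure with a specification. -/
def IsGibbs {ι Ω₀ : Type*} [MeasurableSpace Ω₀] (γ : Specification ι Ω₀)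
    (μ : Measure (ι → Ω₀)) : Prop :=
  ∀ Λ, μ.bind (γ.k Λ) = μ

/-- A specification is quasilocal in the direction `θ`. -/
def SpecQuasilocalInDir {ι Ω₀ : Type*} [MeasurableSpace Ω₀] (γ : Specification ι Ω₀)
    (θ : ι → Ω₀) : Prop :=
  ∀ Λ f, IsLocal f → QuasilocalInDir θ (specInt γ Λ f)

/-- A quasilocal specification. -/
def IsSpecQuasilocal {ι Ω₀ : Type*} [MeasurableSpace Ω₀] (γ : Specification ι Ω₀) : Prop :=
  ∀ Λ f, IsLocal f → IsQuasilocal (specInt γ Λ f)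

/-- A monotonicity-preserving specification. -/
def MonoPreserving {ι Ω₀ : Type*} [MeasurableSpace Ω₀] [Preorder Ω₀]
    (γ : Specification ι Ω₀) : Prop :=
  ∀ Λ (f : (ι → Ω₀) → ℝ), Measurable f → Monotone f → Monotone (specInt γ Λ f)

/-- `γ'` is the limit of `γ` with boundary condition forced to `θ` outside larger
and larger volumes. -/
def IsDirLimitSpec {ι Ω₀ : Type*} [MeasurableSpace Ω₀] (γ γ' : Specification ι Ω₀)
    (θ : ι → Ω₀) : Prop :=
  ∀ Λ f, IsLocal f → ∀ ω,
    Tendsto (fun S : Finset ι => specInt γ Λ f (splice (S : Set ι) ω θ)) atTop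
      (𝓝 (specInt γ' Λ f ω))

/-- `μ` is the weak limit `lim_{Λ↑𝕃} γ_Λ(⬝|θ)`. -/
def IsLimitWithBoundary {ι Ω₀ : Type*} [MeasurableSpace Ω₀] (γ : Specification ι Ω₀)
    (θ : ι → Ω₀) (μ : Measure (ι → Ω₀)) : Prop :=
  IsProbabilityMeasure μ ∧
    ∀ f, IsLocal f → Tendsto (fun Λ : Finset ι => specInt γ Λ f θ) atTop (𝓝 (∫ ω, f ω ∂μ))

/-- The set of configurations at which all the `γ_Λ f` (`f` local) are continuous. -/
def contSet {ι Ω₀ : Type*} [MeasurableSpace Ω₀] [TopologicalSpace Ω₀]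
    (γ : Specification ι Ω₀) : Set (ι → Ω₀) :=
  {ω | ∀ Λ f, IsLocal f → ContinuousAt (specInt γ Λ f) ω}

/-- An almost quasilocal probability measure. -/
def AlmostQuasilocal {ι Ω₀ : Type*} [MeasurableSpace Ω₀] [TopologicalSpace Ω₀]
    (μ : Measure (ι → Ω₀)) : Prop :=
  ∃ γ : Specification ι Ω₀, IsGibbs γ μ ∧ μ (contSet γ) = 1

/-- Sites of the lattice `ℤ^d`. -/
abbrev Site (d : ℕ) := Fin d → ℤ

/-- The cube `Λ_n = ([-n,n] ∩ ℤ)^d`. -/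
def cube (d : ℕ) (n : ℕ) : Finset (Site d) :=
  Fintype.piFinset fun _ => Finset.Icc (-(n : ℤ)) (n : ℤ)

/-- Translation of a configuration by `i`. -/
def shift {Ω₀ : Type*} {d : ℕ} (i : Site d) (ω : Site d → Ω₀) : Site d → Ω₀ :=
  fun x => ω (x - i)

/-- Translation invariance of a measure. -/
def TransInv {Ω₀ : Type*} [MeasurableSpace Ω₀] {d : ℕ} (μ : Measure (Site d → Ω₀)) : Prop :=
  ∀ i : Site d, μ.map (shift i) = μ

/-- Translation invariance of a specification. -/
def TransInvSpec {Ω₀ : Type*} [MeasurableSpace Ω₀] {d : ℕ}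
    (γ : Specification (Site d) Ω₀) : Prop :=
  ∀ (i : Site d) (Λ : Finset (Site d)) (ω),
    γ.k (Λ.image (· + i)) (shift i ω) = (γ.k Λ ω).map (shift i)

/-- Restriction (projection) of a measure to the coordinates in `Δ`. -/
def restrictTo {ι Ω₀ : Type*} [MeasurableSpace Ω₀] (Δ : Finset ι)
    (μ : Measure (ι → Ω₀)) : Measure ({x // x ∈ Δ} → Ω₀) :=
  μ.map (fun ω (x : {x // x ∈ Δ}) => ω (x : ι))

/-- The Radon–Nikodym density `dμ_Δ/dν_Δ`, viewed as a function on configuration space. -/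
def density {ι Ω₀ : Type*} [MeasurableSpace Ω₀] (Δ : Finset ι)
    (μ ν : Measure (ι → Ω₀)) : (ι → Ω₀) → ℝ :=
  fun ω => ((restrictTo Δ μ).rnDeriv (restrictTo Δ ν) (fun x : {x // x ∈ Δ} => ω (x : ι))).toReal

/-- Relative entropy `H_Δ(μ|ν)` at the finite volume `Δ` (`+∞` if `μ_Δ` is not
absolutely continuous with respect to `ν_Δ`). -/
def relEnt {ι Ω₀ : Type*} [MeasurableSpace Ω₀] (Δ : Finset ι)
    (μ ν : Measure (ι → Ω₀)) : ℝ≥0∞ :=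
  if restrictTo Δ μ ≪ restrictTo Δ ν then
    ENNReal.ofReal (∫ ω, density Δ μ ν ω * Real.log (density Δ μ ν ω) ∂ν)
  else ⊤

/-- Vanishing relative entropy density: `h(μ|ν) = 0`. -/
def EntDensityZero {Ω₀ : Type*} [MeasurableSpace Ω₀] {d : ℕ}
    (μ ν : Measure (Site d → Ω₀)) : Prop :=
  Tendsto (fun n => relEnt (cube d n) μ ν / ((cube d n).card : ℝ≥0∞)) atTop (𝓝 0)



section CsiszarAux


lemma log_ge_one_sub_inv {t : ℝ} (ht : 0 < t) : 1 - 1/t ≤ Real.log t := by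
  have h := Real.log_le_sub_one_of_pos (x := 1/t) (by positivity)
  rw [Real.log_div one_ne_zero ht.ne'] at h
  rw [Real.log_one] at h
  have hinv : 1/t - 1 = (1-t)/t := by field_simp
  have h2 : (1:ℝ)/t > 0 := by positivity
  rw [one_div] at h ⊢
  linarith

lemma chi_deriv (t : ℝ) (ht : 0 < t) :
    HasDerivAt (fun t : ℝ => (t+1) * Real.log t - 2*(t-1)) (Real.log t + 1/t - 1) t := by
  have h1 : HasDerivAt (fun t : ℝ => (t+1) * Real.log t) (1 * Real.log t + (t+1) * t⁻¹) t :=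
    ((hasDerivAt_id t).add_const 1).mul (Real.hasDerivAt_log ht.ne')
  have h2 : HasDerivAt (fun t : ℝ => 2*(t-1)) 2 t := by
    simpa using ((hasDerivAt_id t).sub_const 1).const_mul 2
  have := h1.sub h2
  refine this.congr_deriv ?_
  field_simp
  ring

lemma chi_nonneg {t : ℝ} (ht : 1 ≤ t) : 0 ≤ (t+1) * Real.log t - 2*(t-1) := by
  have hmono : MonotoneOn (fun t : ℝ => (t+1) * Real.log t - 2*(t-1)) (Set.Ici 1) := by
    apply monotoneOn_of_deriv_nonneg (convex_Ici 1)
    · intro x hx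
      exact ((chi_deriv x (by simp at hx; linarith)).differentiableAt).continuousAt.continuousWithinAt
    · intro x hx
      rw [interior_Ici] at hx
      exact ((chi_deriv x (by simp at hx; linarith)).differentiableAt).differentiableWithinAt
    · intro x hx
      rw [interior_Ici] at hx
      have hx1 : (1:ℝ) < x := hx
      rw [(chi_deriv x (by linarith)).deriv]
      have := log_ge_one_sub_inv (t := x) (by linarith)
      linarith
  have := hmono (Set.self_mem_Ici) ht ht
  simpa using this

lemma chi_nonpos {t : ℝ} (ht0 : 0 < t) (ht : t ≤ 1) : (t+1) * Real.log t - 2*(t-1) ≤ 0 := by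
  have hmono : MonotoneOn (fun t : ℝ => (t+1) * Real.log t - 2*(t-1)) (Set.Ioc 0 1) := by
    apply monotoneOn_of_deriv_nonneg (convex_Ioc 0 1)
    · intro x hx
      exact ((chi_deriv x hx.1).differentiableAt).continuousAt.continuousWithinAt
    · intro x hx
      rw [interior_Ioc] at hx
      exact ((chi_deriv x hx.1).differentiableAt).differentiableWithinAt
    · intro x hx
      rw [interior_Ioc] at hx
      rw [(chi_deriv x hx.1).deriv]
      have := log_ge_one_sub_inv (t := x) hx.1
      linarith
  have := hmono ⟨ht0, ht⟩ (by norm_num) ht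
  simpa using this

lemma g_deriv (t : ℝ) (ht : 0 < t) :
    HasDerivAt (fun t : ℝ => (2*t+4) * (t * Real.log t - t + 1) - 3*(t-1)^2)
      (4 * ((t+1) * Real.log t - 2*(t-1))) t := by
  have hlog : HasDerivAt Real.log t⁻¹ t := Real.hasDerivAt_log ht.ne'
  have h1 : HasDerivAt (fun t : ℝ => t * Real.log t - t + 1) (Real.log t) t := by
    have := ((hasDerivAt_id t).mul hlog).sub (hasDerivAt_id t)
    have h := this.add_const 1
    refine h.congr_deriv ?_
    field_simp
    simp [id]
  have h2 : HasDerivAt (fun t : ℝ => 2*t+4) 2 t := by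
    simpa using ((hasDerivAt_id t).const_mul 2).add_const 4
  have h3 : HasDerivAt (fun t : ℝ => 3*(t-1)^2) (3*(2*(t-1))) t := by
    have := (((hasDerivAt_id t).sub_const 1).pow 2).const_mul 3
    refine this.congr_deriv ?_
    simp [id]
  have := (h2.mul h1).sub h3
  refine this.congr_deriv ?_
  ring

lemma key_pointwise {t : ℝ} (ht : 0 < t) :
    3*(t-1)^2 ≤ (2*t+4) * (t * Real.log t - t + 1) := by
  rcases le_total 1 t with h1 | h1
  · have hmono : MonotoneOn (fun t : ℝ => (2*t+4) * (t * Real.log t - t + 1) - 3*(t-1)^2)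
        (Set.Ici 1) := by
      apply monotoneOn_of_deriv_nonneg (convex_Ici 1)
      · intro x hx
        exact ((g_deriv x (by simp at hx; linarith)).differentiableAt).continuousAt.continuousWithinAt
      · intro x hx
        rw [interior_Ici] at hx
        exact ((g_deriv x (by simp at hx; linarith)).differentiableAt).differentiableWithinAt
      · intro x hx
        rw [interior_Ici] at hx
        have hx1 : (1:ℝ) < x := hx
        rw [(g_deriv x (by linarith)).deriv]
        have := chi_nonneg hx1.le
        linarith
    have := hmono Set.self_mem_Ici h1 h1
    simp only [Real.log_one] at this
    nlinarith [this]
  · have hmono : AntitoneOn (fun t : ℝ => (2*t+4) * (t * Real.log t - t + 1) - 3*(t-1)^2)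
        (Set.Ioc 0 1) := by
      apply antitoneOn_of_deriv_nonpos (convex_Ioc 0 1)
      · intro x hx
        exact ((g_deriv x hx.1).differentiableAt).continuousAt.continuousWithinAt
      · intro x hx
        rw [interior_Ioc] at hx
        exact ((g_deriv x hx.1).differentiableAt).differentiableWithinAt
      · intro x hx
        rw [interior_Ioc] at hx
        rw [(g_deriv x hx.1).deriv]
        have := chi_nonpos hx.1 hx.2.le
        linarith
    have := hmono ⟨ht, h1⟩ (by norm_num) h1
    simp only [Real.log_one] at this
    nlinarith [this]

-- term lemma
lemma term_bound {p ρ : ℝ} (hp : 0 ≤ p) (hρ : 0 ≤ ρ) (hac : ρ = 0 → p = 0)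
    {L : ℝ} (hL : p ≠ 0 → L = Real.log (p / ρ)) :
    3*(p - ρ)^2 / (2*p + 4*ρ) ≤ p * L - p + ρ := by
  rcases eq_or_lt_of_le hρ with hρ0 | hρpos
  · have hp0 : p = 0 := hac hρ0.symm
    simp [hp0, ← hρ0]
  rcases eq_or_lt_of_le hp with hp0 | hppos
  · rw [← hp0]
    rw [div_le_iff₀ (by nlinarith)]
    nlinarith
  · rw [hL hppos.ne']
    obtain ⟨t, ht⟩ : ∃ t, t = p / ρ := ⟨_, rfl⟩
    have htpos : 0 < t := by rw [ht]; positivity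
    have key := key_pointwise htpos
    have hpt : p = t * ρ := by rw [ht]; field_simp
    rw [← ht, div_le_iff₀ (by nlinarith), hpt]
    nlinarith [mul_le_mul_of_nonneg_left key (by positivity : (0:ℝ) ≤ ρ^2), sq_nonneg (t-1), hρpos]

lemma finite_pinsker {α : Type*} [Fintype α] (p ρ : α → ℝ) (L : α → ℝ)
    (hp : ∀ a, 0 ≤ p a) (hρ : ∀ a, 0 ≤ ρ a)
    (hp1 : ∑ a, p a = 1) (hρ1 : ∑ a, ρ a = 1)
    (hac : ∀ a, ρ a = 0 → p a = 0)
    (hL : ∀ a, p a ≠ 0 → L a = Real.log (p a / ρ a)) :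
    (1/2) * (∑ a, |p a - ρ a|)^2 ≤ ∑ a, p a * L a := by
  have hT : ∀ a, 3*(p a - ρ a)^2 / (2*p a + 4*ρ a) ≤ p a * L a - p a + ρ a :=
    fun a => term_bound (hp a) (hρ a) (hac a) (hL a)
  -- Cauchy-Schwarz
  have cs := Finset.sum_mul_sq_le_sq_mul_sq Finset.univ
    (fun a => |p a - ρ a| / Real.sqrt (2*p a + 4*ρ a))
    (fun a => Real.sqrt (2*p a + 4*ρ a))
  have hfg : ∀ a : α, |p a - ρ a| / Real.sqrt (2*p a + 4*ρ a) * Real.sqrt (2*p a + 4*ρ a)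
      = |p a - ρ a| := by
    intro a
    rcases eq_or_lt_of_le (by nlinarith [hp a, hρ a] : (0:ℝ) ≤ 2*p a + 4*ρ a) with h0 | hpos
    · have hpa : p a = 0 := by nlinarith [hp a, hρ a]
      have hra : ρ a = 0 := by nlinarith [hp a, hρ a]
      simp [hpa, hra]
    · rw [div_mul_cancel₀]
      exact (Real.sqrt_pos.2 hpos).ne'
  have hsq : ∀ a : α, (|p a - ρ a| / Real.sqrt (2*p a + 4*ρ a))^2
      = (p a - ρ a)^2 / (2*p a + 4*ρ a) := by
    intro a
    rw [div_pow, Real.sq_sqrt (by nlinarith [hp a, hρ a]), sq_abs]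
  have hsq2 : ∀ a : α, (Real.sqrt (2*p a + 4*ρ a))^2 = 2*p a + 4*ρ a := by
    intro a; rw [Real.sq_sqrt (by nlinarith [hp a, hρ a])]
  simp only [hfg] at cs
  rw [Finset.sum_congr rfl (fun a _ => hsq a), Finset.sum_congr rfl (fun a _ => hsq2 a)] at cs
  have hsum2 : ∑ a, (2*p a + 4*ρ a) = 6 := by
    rw [Finset.sum_add_distrib, ← Finset.mul_sum, ← Finset.mul_sum, hp1, hρ1]; norm_num
  rw [hsum2] at cs
  have hTs : ∑ a, (p a - ρ a)^2 / (2*p a + 4*ρ a) ≤ (1/3) * ∑ a, (p a * L a - p a + ρ a) := by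
    rw [Finset.mul_sum]
    apply Finset.sum_le_sum
    intro a _
    have := hT a
    have h3 : 3*(p a - ρ a)^2 / (2*p a + 4*ρ a) = 3 * ((p a - ρ a)^2 / (2*p a + 4*ρ a)) := by
      ring
    rw [h3] at this
    linarith
  have hTsum : ∑ a, (p a * L a - p a + ρ a) = ∑ a, p a * L a := by
    rw [Finset.sum_add_distrib, Finset.sum_sub_distrib, hp1, hρ1]; ring
  rw [hTsum] at hTs
  nlinarith [cs, hTs]


-- ENNReal pointwise rnDeriv identity on a countable discrete space
lemma rnDeriv_mul_singleton {B : Type*} [MeasurableSpace B] [MeasurableSingletonClass B]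
    (m n : Measure B) [IsFiniteMeasure m] [IsFiniteMeasure n] (h : m ≪ n) (b : B) :
    m.rnDeriv n b * n {b} = m {b} := by
  have hwd := Measure.withDensity_rnDeriv_eq m n h
  conv_rhs => rw [← hwd]
  rw [withDensity_apply _ (measurableSet_singleton b), lintegral_singleton]

lemma toReal_rnDeriv_mul {B : Type*} [MeasurableSpace B] [MeasurableSingletonClass B]
    (m n : Measure B) [IsFiniteMeasure m] [IsFiniteMeasure n] (h : m ≪ n) (b : B) :
    (m {b}).toReal = (n {b}).toReal * (m.rnDeriv n b).toReal := by
  by_cases hn : n {b} = 0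
  · have hm : m {b} = 0 := h hn
    simp [hm, hn]
  · have hid := rnDeriv_mul_singleton m n h b
    have hfin : m.rnDeriv n b ≠ ∞ := by
      intro htop
      rw [htop] at hid
      rw [ENNReal.top_mul hn] at hid
      exact (measure_ne_top m {b}) hid.symm
    rw [← hid, ENNReal.toReal_mul, mul_comm]

lemma rnDeriv_toReal_eq_zero {B : Type*} [MeasurableSpace B] [MeasurableSingletonClass B]
    (m n : Measure B) [IsFiniteMeasure m] [IsFiniteMeasure n] (h : m ≪ n) (b : B)
    (hz : (m.rnDeriv n b).toReal = 0) : m {b} = 0 := by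
  have hid := rnDeriv_mul_singleton m n h b
  rcases ENNReal.toReal_eq_zero_iff _ |>.1 hz with h0 | htop
  · rw [h0, zero_mul] at hid; exact hid.symm
  · rw [htop] at hid
    by_cases hn : n {b} = 0
    · rw [hn, mul_zero] at hid; exact hid.symm
    · rw [ENNReal.top_mul hn] at hid
      exact absurd hid.symm (measure_ne_top m {b})

-- generic integral of composed local function
lemma integral_comp_proj {Ω : Type*} [MeasurableSpace Ω] {B : Type*} [Fintype B]
    [MeasurableSpace B] [MeasurableSingletonClass B]
    (φ : Ω → B) (hφ : Measurable φ) (κ : Measure Ω) [IsProbabilityMeasure κ] (F : B → ℝ) :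
    ∫ ω, F (φ ω) ∂κ = ∑ b, ((κ.map φ) {b}).toReal * F b := by
  haveI : IsProbabilityMeasure (κ.map φ) := Measure.isProbabilityMeasure_map hφ.aemeasurable
  rw [← integral_map hφ.aemeasurable
    ((Measurable.of_discrete (f := F)).aestronglyMeasurable)]
  rw [integral_fintype (.of_finite)]
  simp [smul_eq_mul, Measure.real]

end CsiszarAux

/-- Csiszár's inequality: for `Δ' ⊆ Δ` finite and `μ_Δ ≪ ν_Δ`,
`H_Δ(μ|ν) − H_{Δ'}(μ|ν) ≥ ½ (∫ |g_Δ − g_{Δ'}| dν)²`. -/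
theorem csiszar_inequality
    {Ω₀ : Type*} [Fintype Ω₀] [MeasurableSpace Ω₀] [DiscreteMeasurableSpace Ω₀] {d : ℕ}
    (μ ν : Measure (Site d → Ω₀))
    (hμ : IsProbabilityMeasure μ) (hν : IsProbabilityMeasure ν)
    (Δ' Δ : Finset (Site d)) (hsub : Δ' ⊆ Δ)
    (hac : restrictTo Δ μ ≪ restrictTo Δ ν) :
    (∫ ω, density Δ μ ν ω * Real.log (density Δ μ ν ω) ∂ν)
        - (∫ ω, density Δ' μ ν ω * Real.log (density Δ' μ ν ω) ∂ν)
      ≥ (1 / 2) * (∫ ω, |density Δ μ ν ω - density Δ' μ ν ω| ∂ν) ^ 2 := by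
  classical
  set A := ({x // x ∈ Δ} → Ω₀) with hA
  set A' := ({x // x ∈ Δ'} → Ω₀) with hA'
  set π : (Site d → Ω₀) → A := fun ω x => ω (x : Site d) with hπdef
  set π' : (Site d → Ω₀) → A' := fun ω x => ω (x : Site d) with hπ'def
  set r : A → A' := fun a x => a ⟨(x : Site d), hsub x.2⟩ with hrdef
  have hπ : Measurable π := measurable_pi_lambda _ fun x => measurable_pi_apply _
  have hπ' : Measurable π' := measurable_pi_lambda _ fun x => measurable_pi_apply _
  have hr : Measurable r := measurable_pi_lambda _ fun x => measurable_pi_apply _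
  have hμΔ : restrictTo Δ μ = μ.map π := rfl
  have hνΔ : restrictTo Δ ν = ν.map π := rfl
  have hμΔ' : restrictTo Δ' μ = μ.map π' := rfl
  have hνΔ' : restrictTo Δ' ν = ν.map π' := rfl
  haveI : IsProbabilityMeasure (restrictTo Δ μ) := by
    rw [hμΔ]; exact Measure.isProbabilityMeasure_map hπ.aemeasurable
  haveI : IsProbabilityMeasure (restrictTo Δ ν) := by
    rw [hνΔ]; exact Measure.isProbabilityMeasure_map hπ.aemeasurable
  haveI : IsProbabilityMeasure (restrictTo Δ' μ) := by
    rw [hμΔ']; exact Measure.isProbabilityMeasure_map hπ'.aemeasurable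
  haveI : IsProbabilityMeasure (restrictTo Δ' ν) := by
    rw [hνΔ']; exact Measure.isProbabilityMeasure_map hπ'.aemeasurable
  -- Δ' level absolute continuity
  have hmapμ : restrictTo Δ' μ = (restrictTo Δ μ).map r := by
    rw [hμΔ', hμΔ, Measure.map_map hr hπ]; rfl
  have hmapν : restrictTo Δ' ν = (restrictTo Δ ν).map r := by
    rw [hνΔ', hνΔ, Measure.map_map hr hπ]; rfl
  have hac' : restrictTo Δ' μ ≪ restrictTo Δ' ν := by
    rw [hmapμ, hmapν]; exact hac.map hr
  -- densities and weights
  set G : A → ℝ := fun a => ((restrictTo Δ μ).rnDeriv (restrictTo Δ ν) a).toReal with hGdef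
  set G' : A' → ℝ := fun b => ((restrictTo Δ' μ).rnDeriv (restrictTo Δ' ν) b).toReal with hG'def
  set p : A → ℝ := fun a => ((restrictTo Δ μ) {a}).toReal with hpdef
  set q : A → ℝ := fun a => ((restrictTo Δ ν) {a}).toReal with hqdef
  set ρ : A → ℝ := fun a => q a * G' (r a) with hρdef
  have hGnn : ∀ a, 0 ≤ G a := fun a => ENNReal.toReal_nonneg
  have hG'nn : ∀ b, 0 ≤ G' b := fun b => ENNReal.toReal_nonneg
  have hqnn : ∀ a, 0 ≤ q a := fun a => ENNReal.toReal_nonneg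
  have hpnn : ∀ a, 0 ≤ p a := fun a => ENNReal.toReal_nonneg
  have hpq : ∀ a, p a = q a * G a := fun a => toReal_rnDeriv_mul _ _ hac a
  -- integral reductions
  have hintν : ∀ F : A → ℝ, ∫ ω, F (π ω) ∂ν = ∑ a, q a * F a :=
    fun F => integral_comp_proj π hπ ν F
  have hintν' : ∀ F : A' → ℝ,
      ∫ ω, F (π' ω) ∂ν = ∑ b, ((restrictTo Δ' ν) {b}).toReal * F b :=
    fun F => integral_comp_proj π' hπ' ν F
  have hintμ : ∀ F : A → ℝ, ∫ ω, F (π ω) ∂μ = ∑ a, p a * F a :=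
    fun F => integral_comp_proj π hπ μ F
  have hintμ' : ∀ F : A' → ℝ,
      ∫ ω, F (π' ω) ∂μ = ∑ b, ((restrictTo Δ' μ) {b}).toReal * F b :=
    fun F => integral_comp_proj π' hπ' μ F
  -- sums to one
  have hq1 : ∑ a, q a = 1 := by
    have := hintν (fun _ => (1:ℝ))
    simpa using this.symm
  have hp1 : ∑ a, p a = 1 := by
    have := hintμ (fun _ => (1:ℝ))
    simpa using this.symm
  -- composition identity : π' = r ∘ π (definitionally)
  have hcomp : ∀ ω, π' ω = r (π ω) := fun ω => rfl
  -- ∑ ρ = 1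
  have hρ1 : ∑ a, ρ a = 1 := by
    have h1 : ∑ a, q a * G' (r a) = ∫ ω, G' (π' ω) ∂ν := (hintν (fun a => G' (r a))).symm
    have h2 : ∫ ω, G' (π' ω) ∂ν = ∑ b, ((restrictTo Δ' ν) {b}).toReal * G' b := hintν' G'
    have h3 : ∀ b : A', ((restrictTo Δ' ν) {b}).toReal * G' b
        = ((restrictTo Δ' μ) {b}).toReal := fun b => (toReal_rnDeriv_mul _ _ hac' b).symm
    have h4 : ∑ b : A', ((restrictTo Δ' μ) {b}).toReal = 1 := by
      have := hintμ' (fun _ => (1:ℝ))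
      simpa using this.symm
    calc ∑ a, ρ a = ∑ a, q a * G' (r a) := rfl
      _ = ∑ b, ((restrictTo Δ' ν) {b}).toReal * G' b := by rw [h1, h2]
      _ = ∑ b : A', ((restrictTo Δ' μ) {b}).toReal := Finset.sum_congr rfl fun b _ => h3 b
      _ = 1 := h4
  -- absolute continuity for the finite lemma
  have hacfin : ∀ a, ρ a = 0 → p a = 0 := by
    intro a hρ0
    rcases mul_eq_zero.1 hρ0 with hq0 | hG0
    · -- q a = 0 hence ν_Δ {a} = 0 hence μ_Δ {a} = 0
      have hν0 : (restrictTo Δ ν) {a} = 0 := by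
        have := (ENNReal.toReal_eq_zero_iff _).1 hq0
        rcases this with h | h
        · exact h
        · exact absurd h (measure_ne_top _ _)
      have : (restrictTo Δ μ) {a} = 0 := hac hν0
      rw [hpdef]; simp [this]
    · -- G' (r a) = 0 hence μ_{Δ'} {r a} = 0 hence μ_Δ {a} = 0
      have hμ'0 : (restrictTo Δ' μ) {r a} = 0 := rnDeriv_toReal_eq_zero _ _ hac' _ hG0
      have hsubset : π ⁻¹' {a} ⊆ π' ⁻¹' {r a} := by
        intro ω hω
        simp only [Set.mem_preimage, Set.mem_singleton_iff] at hω ⊢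
        rw [hcomp ω, hω]
      have hle : (restrictTo Δ μ) {a} ≤ (restrictTo Δ' μ) {r a} := by
        rw [hμΔ, hμΔ', Measure.map_apply hπ (measurableSet_singleton _),
          Measure.map_apply hπ' (measurableSet_singleton _)]
        exact measure_mono hsubset
      have : (restrictTo Δ μ) {a} = 0 := le_antisymm (hμ'0 ▸ hle) zero_le
      rw [hpdef]; simp [this]
  -- the log-ratio function
  set L : A → ℝ := fun a => Real.log (G a) - Real.log (G' (r a)) with hLdef
  have hL : ∀ a, p a ≠ 0 → L a = Real.log (p a / ρ a) := by
    intro a hpa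
    have hqa : q a ≠ 0 := by
      intro h; apply hpa; rw [hpq a, h, zero_mul]
    have hGa : G a ≠ 0 := by
      intro h; apply hpa; rw [hpq a, h, mul_zero]
    have hρa : ρ a ≠ 0 := fun h => hpa (hacfin a h)
    have hG'a : G' (r a) ≠ 0 := by
      intro h; apply hρa; rw [hρdef]; simp [h]
    have : p a / ρ a = G a / G' (r a) := by
      rw [hpq a, hρdef]
      rw [mul_div_mul_left _ _ hqa]
    rw [this, hLdef, Real.log_div hGa hG'a]
  -- apply the finite Pinsker inequality
  have hρnn : ∀ a, 0 ≤ ρ a := fun a => mul_nonneg (hqnn a) (hG'nn _)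
  have main := finite_pinsker p ρ L hpnn hρnn hp1 hρ1 hacfin hL
  -- identify the three integrals
  have e1 : (∫ ω, density Δ μ ν ω * Real.log (density Δ μ ν ω) ∂ν)
      = ∑ a, q a * (G a * Real.log (G a)) := hintν (fun a => G a * Real.log (G a))
  have e2 : (∫ ω, density Δ' μ ν ω * Real.log (density Δ' μ ν ω) ∂ν)
      = ∑ b, ((restrictTo Δ' ν) {b}).toReal * (G' b * Real.log (G' b)) :=
    hintν' (fun b => G' b * Real.log (G' b))
  have e3 : (∫ ω, |density Δ μ ν ω - density Δ' μ ν ω| ∂ν)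
      = ∑ a, q a * |G a - G' (r a)| := hintν (fun a => |G a - G' (r a)|)
  -- rewrite e1 sum as ∑ p log G
  have e1' : ∑ a, q a * (G a * Real.log (G a)) = ∑ a, p a * Real.log (G a) :=
    Finset.sum_congr rfl fun a _ => by rw [hpq a]; ring
  -- rewrite e2 sum as ∑ p a * log (G' (r a))
  have e2' : ∑ b, ((restrictTo Δ' ν) {b}).toReal * (G' b * Real.log (G' b))
      = ∑ a, p a * Real.log (G' (r a)) := by
    have h3 : ∀ b : A', ((restrictTo Δ' ν) {b}).toReal * (G' b * Real.log (G' b))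
        = ((restrictTo Δ' μ) {b}).toReal * Real.log (G' b) := by
      intro b
      rw [toReal_rnDeriv_mul _ _ hac' b]
      ring
    rw [Finset.sum_congr rfl fun b _ => h3 b]
    have h4 : ∑ b, ((restrictTo Δ' μ) {b}).toReal * Real.log (G' b)
        = ∫ ω, Real.log (G' (π' ω)) ∂μ := (hintμ' (fun b => Real.log (G' b))).symm
    have h5 : ∫ ω, Real.log (G' (π' ω)) ∂μ = ∑ a, p a * Real.log (G' (r a)) :=
      hintμ (fun a => Real.log (G' (r a)))
    rw [h4, h5]
  -- rewrite e3 sum as ∑ |p - ρ|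
  have e3' : ∑ a, q a * |G a - G' (r a)| = ∑ a, |p a - ρ a| := by
    apply Finset.sum_congr rfl
    intro a _
    have h : p a - ρ a = q a * (G a - G' (r a)) := by
      simp only [hpq a, hρdef]; ring
    rw [h, abs_mul, abs_of_nonneg (hqnn a)]
  -- conclude
  have hsplit : ∑ a, p a * L a
      = (∑ a, p a * Real.log (G a)) - ∑ a, p a * Real.log (G' (r a)) := by
    rw [← Finset.sum_sub_distrib]
    apply Finset.sum_congr rfl
    intro a _
    rw [hLdef]
    ring
  rw [ge_iff_le, e1, e2, e3, e1', e2', e3']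
  rw [← hsplit]
  simpa using main


end
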